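/- Let λ > 0, α > 0, β > 0 and let f : ℝ → ℝ be integrable (f ∈ L¹(ℝ)) and bounded. Then the right tempered fractional integrals satisfy the semigroup property: for every x ∈ ℝ, I₋^{α,λ}(I₋^{β,λ} f)(x) = I₋^{α+β,λ} f(x). -/

import Mathlib

open MeasureTheory

/-- Right tempered fractional integral
`I₋^{α,λ} f(x) = (1/Γ(α)) ∫_x^{∞} (η−x)^{α−1} e^{−λ(η−x)} f(η) dη`. -/
noncomputable def rightTemperedIntegral (α lam : ℝ) (f : ℝ → ℝ) (x : ℝ) : ℝ :=
  (1 / Real.Gamma α) * ∫ η in Set.Ici x, (η - x) ^ (α - 1) * Real.exp (-lam * (η - x)) * f η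

open Set
lemma shift_integrableOn {g : ℝ → ℝ} (c : ℝ) (h : IntegrableOn g (Ioi 0)) :
    IntegrableOn (fun η => g (η - c)) (Ioi c) := by
  refine (integrable_indicator_iff measurableSet_Ioi).mp ?_
  have h' : Integrable ((Ioi (0:ℝ)).indicator g) := by
    rwa [integrable_indicator_iff measurableSet_Ioi]
  have := h'.comp_sub_right c
  convert this using 1
  · rfl
  funext η
  by_cases hη : c < η
  · simp [indicator, hη, sub_pos.mpr hη]
  · simp [indicator, hη, fun h' => hη (sub_pos.mp h'), sub_pos]

lemma shift_integral (g : ℝ → ℝ) (c : ℝ) :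
    ∫ η in Ioi c, g (η - c) = ∫ u in Ioi 0, g u := by
  rw [← integral_indicator measurableSet_Ioi, ← integral_indicator measurableSet_Ioi]
  have : ∀ η, (Ioi c).indicator (fun η => g (η - c)) η = (Ioi 0).indicator g (η - c) := by
    intro η
    by_cases hη : c < η
    · simp [indicator, hη, sub_pos.mpr hη]
    · simp [indicator, hη, fun h' => hη (sub_pos.mp h'), sub_pos]
  simp_rw [this]
  exact integral_sub_right_eq_self ((Ioi (0:ℝ)).indicator g) c

lemma ker_integrableOn {γ lam : ℝ} (hγ : 0 < γ) (hlam : 0 < lam) (c : ℝ) :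
    IntegrableOn (fun η => (η - c) ^ (γ - 1) * Real.exp (-lam * (η - c))) (Ioi c) := by
  have h0 : IntegrableOn (fun u : ℝ => u ^ (γ - 1) * Real.exp (-lam * u)) (Ioi 0) := by
    have h := integrableOn_rpow_mul_exp_neg_mul_rpow (p := 1) (s := γ - 1) (b := lam)
      (by linarith) one_pos hlam
    simp only [Real.rpow_one] at h
    exact h
  exact shift_integrableOn (g := fun u : ℝ => u ^ (γ - 1) * Real.exp (-lam * u)) c h0

lemma ker_integral {γ lam : ℝ} (hγ : 0 < γ) (hlam : 0 < lam) (c : ℝ) :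
    ∫ η in Ioi c, (η - c) ^ (γ - 1) * Real.exp (-lam * (η - c)) =
      (1 / lam) ^ γ * Real.Gamma γ := by
  rw [shift_integral (fun u => u ^ (γ - 1) * Real.exp (-lam * u)) c]
  simpa [neg_mul] using Real.integral_rpow_mul_exp_neg_mul_Ioi hγ hlam

lemma real_beta_scaled {s t a : ℝ} (hs : 0 < s) (ht : 0 < t) (ha : 0 < a) :
    ∫ u in (0:ℝ)..a, u ^ (s - 1) * (a - u) ^ (t - 1)
      = a ^ (s + t - 1) * (Real.Gamma s * Real.Gamma t / Real.Gamma (s + t)) := by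
  have hst : (0:ℝ) < s + t := by linarith
  have hΓ : Real.Gamma (s + t) ≠ 0 := (Real.Gamma_pos_of_pos hst).ne'
  have hbeta : Complex.betaIntegral s t =
      ((Real.Gamma s * Real.Gamma t / Real.Gamma (s + t) : ℝ) : ℂ) := by
    have h := Complex.Gamma_mul_Gamma_eq_betaIntegral (s := (s:ℂ)) (t := (t:ℂ))
      (by simpa using hs) (by simpa using ht)
    have hc : ((s:ℂ) + t) = ((s + t : ℝ) : ℂ) := by push_cast; ring
    rw [hc, Complex.Gamma_ofReal, Complex.Gamma_ofReal, Complex.Gamma_ofReal] at h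
    have hΓc : ((Real.Gamma (s + t) : ℂ)) ≠ 0 := by exact_mod_cast hΓ
    field_simp at h ⊢
    push_cast; rw [h, mul_div_cancel_left₀ _ hΓc]
  have hscaled := Complex.betaIntegral_scaled (s:ℂ) (t:ℂ) ha
  have hLHS : (∫ u in (0:ℝ)..a, ((u:ℂ)) ^ ((s:ℂ) - 1) * (((a:ℂ)) - u) ^ ((t:ℂ) - 1))
      = ((∫ u in (0:ℝ)..a, u ^ (s - 1) * (a - u) ^ (t - 1) : ℝ) : ℂ) := by
    have step1 : (∫ u in (0:ℝ)..a, ((u:ℂ)) ^ ((s:ℂ) - 1) * (((a:ℂ)) - u) ^ ((t:ℂ) - 1))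
        = ∫ u in (0:ℝ)..a, ((u ^ (s - 1) * (a - u) ^ (t - 1) : ℝ) : ℂ) := by
      rw [intervalIntegral.integral_of_le ha.le, intervalIntegral.integral_of_le ha.le]
      refine setIntegral_congr_fun measurableSet_Ioc fun u hu => ?_
      have hu0 : (0:ℝ) ≤ u := hu.1.le
      have hau : (0:ℝ) ≤ a - u := by linarith [hu.2]
      rw [Complex.ofReal_mul, Complex.ofReal_cpow hu0, Complex.ofReal_cpow hau]
      push_cast
      ring_nf
    rw [step1, intervalIntegral.integral_ofReal]
  have hpow : ((a:ℂ)) ^ ((s:ℂ) + t - 1) = ((a ^ (s + t - 1) : ℝ) : ℂ) := by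
    rw [Complex.ofReal_cpow ha.le]
    push_cast
    ring_nf
  rw [hLHS, hpow, hbeta, ← Complex.ofReal_mul] at hscaled
  exact_mod_cast hscaled

lemma beta_interval {s t x η : ℝ} (hs : 0 < s) (ht : 0 < t) (hxη : x < η) :
    ∫ u in x..η, (u - x) ^ (s - 1) * (η - u) ^ (t - 1)
      = (η - x) ^ (s + t - 1) * (Real.Gamma s * Real.Gamma t / Real.Gamma (s + t)) := by
  have h1 : ∫ u in x..η, (u - x) ^ (s - 1) * (η - u) ^ (t - 1)
      = ∫ u in (0:ℝ)..(η - x), u ^ (s - 1) * ((η - x) - u) ^ (t - 1) := by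
    have := intervalIntegral.integral_comp_sub_right
      (a := x) (b := η) (fun u => u ^ (s - 1) * ((η - x) - u) ^ (t - 1)) x
    simp only [sub_self] at this
    rw [← this]
    congr 1
    funext u
    congr 2
    ring
  rw [h1]
  exact real_beta_scaled hs ht (by linarith)


theorem right_tempered_integral_semigroup (lam α β : ℝ) (hlam : 0 < lam) (hα : 0 < α)
    (hβ : 0 < β) (f : ℝ → ℝ) (hf : Integrable f) (hfb : ∃ C, ∀ x, |f x| ≤ C) :
    ∀ x : ℝ, rightTemperedIntegral α lam (rightTemperedIntegral β lam f) x =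
      rightTemperedIntegral (α + β) lam f x := by
  obtain ⟨C, hC⟩ := hfb
  have hC0 : 0 ≤ C := (abs_nonneg _).trans (hC 0)
  have hΓα : 0 < Real.Gamma α := Real.Gamma_pos_of_pos hα
  have hΓβ : 0 < Real.Gamma β := Real.Gamma_pos_of_pos hβ
  have hΓαβ : 0 < Real.Gamma (α + β) := Real.Gamma_pos_of_pos (by linarith)
  intro x
  set g' : ℝ × ℝ → ℝ := fun p =>
    (p.1 - x) ^ (α - 1) * (p.2 - p.1) ^ (β - 1) * Real.exp (-lam * (p.2 - x)) * f p.2 with hg'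
  set S : Set (ℝ × ℝ) := {p | x < p.1 ∧ p.1 < p.2} with hSdef
  have hSm : MeasurableSet S :=
    (measurableSet_lt measurable_const measurable_fst).inter
      (measurableSet_lt measurable_fst measurable_snd)
  -- measurability of g'
  have hg'm : AEStronglyMeasurable g' (volume.prod volume) := by
    apply AEStronglyMeasurable.mul
    · exact (by fun_prop :
        Measurable fun p : ℝ × ℝ =>
          (p.1 - x) ^ (α - 1) * (p.2 - p.1) ^ (β - 1) * Real.exp (-lam * (p.2 - x))
        ).aestronglyMeasurable
    · exact hf.aestronglyMeasurable.comp_quasiMeasurePreserving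
        MeasureTheory.Measure.quasiMeasurePreserving_snd
  have hFm : AEStronglyMeasurable (S.indicator g') (volume.prod volume) :=
    hg'm.indicator hSm
  -- integrability of the kernel times f
  have hkerf : ∀ c : ℝ,
      IntegrableOn (fun η => (η - c) ^ (β - 1) * Real.exp (-lam * (η - c)) * f η) (Ioi c) := by
    intro c
    apply Integrable.mono' ((ker_integrableOn hβ hlam c).const_mul C)
    · exact ((by fun_prop :
        Measurable fun η : ℝ => (η - c) ^ (β - 1) * Real.exp (-lam * (η - c))
        ).aestronglyMeasurable.mul hf.aestronglyMeasurable).restrict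
    · refine (ae_restrict_iff' measurableSet_Ioi).mpr (ae_of_all _ fun η hη => ?_)
      have h1 : (0:ℝ) ≤ (η - c) ^ (β - 1) := Real.rpow_nonneg (by simp at hη; linarith) _
      have h2 : (0:ℝ) < Real.exp (-lam * (η - c)) := Real.exp_pos _
      have : ‖(η - c) ^ (β - 1) * Real.exp (-lam * (η - c)) * f η‖
          = (η - c) ^ (β - 1) * Real.exp (-lam * (η - c)) * |f η| := by
        rw [Real.norm_eq_abs, abs_mul, abs_of_nonneg (by positivity)]
      rw [this]
      calc (η - c) ^ (β - 1) * Real.exp (-lam * (η - c)) * |f η|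
          ≤ (η - c) ^ (β - 1) * Real.exp (-lam * (η - c)) * C := by
            apply mul_le_mul_of_nonneg_left (hC η) (by positivity)
        _ = C * ((η - c) ^ (β - 1) * Real.exp (-lam * (η - c))) := by ring
  -- for x < t, the slice integrand splits
  have hsplit : ∀ t η : ℝ, g' (t, η) =
      ((t - x) ^ (α - 1) * Real.exp (-lam * (t - x))) *
        ((η - t) ^ (β - 1) * Real.exp (-lam * (η - t)) * f η) := by
    intro t η
    simp only [hg']
    rw [show -lam * (η - x) = -lam * (t - x) + -lam * (η - t) by ring, Real.exp_add]
    ring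
  -- slice description in t
  have hslice : ∀ t : ℝ, x < t →
      (fun η => S.indicator g' (t, η)) = (Ioi t).indicator (fun η => g' (t, η)) := by
    intro t hxt
    funext η
    by_cases h : t < η
    · simp [hSdef, indicator, hxt, h]
    · simp [hSdef, indicator, hxt, h]
  have hslice0 : ∀ t : ℝ, ¬ x < t → (fun η => S.indicator g' (t, η)) = fun _ => (0:ℝ) := by
    intro t hxt
    funext η
    simp [hSdef, indicator, hxt]
  -- slice integrability in η
  have hsliceInt : ∀ t : ℝ, x < t → Integrable (fun η => S.indicator g' (t, η)) := by
    intro t hxt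
    rw [hslice t hxt, integrable_indicator_iff measurableSet_Ioi]
    have : (fun η => g' (t, η)) = fun η =>
        ((t - x) ^ (α - 1) * Real.exp (-lam * (t - x))) *
          ((η - t) ^ (β - 1) * Real.exp (-lam * (η - t)) * f η) := by
      funext η; exact hsplit t η
    rw [this]
    exact (hkerf t).const_mul _
  set Kβ : ℝ := (1 / lam) ^ β * Real.Gamma β with hKβ
  have hKβ0 : 0 ≤ Kβ := by
    rw [hKβ]; positivity
  -- Fubini integrability
  have hFint : Integrable (Function.uncurry fun t η => S.indicator g' (t, η))
      (volume.prod volume) := by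
    have huncurry : (Function.uncurry fun t η => S.indicator g' (t, η)) = S.indicator g' := rfl
    rw [huncurry, integrable_prod_iff hFm]
    constructor
    · refine ae_of_all _ (fun t => ?_)
      by_cases hxt : x < t
      · exact hsliceInt t hxt
      · rw [show (fun η => S.indicator g' (t, η)) = fun _ => (0:ℝ) from hslice0 t hxt]
        exact integrable_zero _ _ _
    · apply Integrable.mono'
        (g := (Ioi x).indicator fun t =>
          (C * Kβ) * ((t - x) ^ (α - 1) * Real.exp (-lam * (t - x))))
      · rw [integrable_indicator_iff measurableSet_Ioi]
        exact (ker_integrableOn hα hlam x).const_mul _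
      · exact hFm.norm.integral_prod_right'
      · refine ae_of_all _ (fun t => ?_)
        have hnn : 0 ≤ ∫ η, ‖S.indicator g' (t, η)‖ :=
          integral_nonneg fun η => norm_nonneg _
        rw [Real.norm_eq_abs, abs_of_nonneg hnn]
        by_cases hxt : x < t
        · have hInt1 : IntegrableOn (fun η => g' (t, η)) (Ioi t) := by
            have := hsliceInt t hxt
            rw [hslice t hxt, integrable_indicator_iff measurableSet_Ioi] at this
            exact this
          have hpt : ∀ η, S.indicator g' (t, η) = (Ioi t).indicator (fun η => g' (t, η)) η :=
            fun η => congrFun (hslice t hxt) η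
          have h1 : ∫ η, ‖S.indicator g' (t, η)‖ = ∫ η in Ioi t, ‖g' (t, η)‖ := by
            simp only [hpt]
            simp_rw [norm_indicator_eq_indicator_norm]
            rw [integral_indicator measurableSet_Ioi]
          rw [h1, indicator_of_mem (show t ∈ Ioi x from hxt)]
          have hb : ∀ η ∈ Ioi t, ‖g' (t, η)‖ ≤
              ((t - x) ^ (α - 1) * Real.exp (-lam * (t - x)) * C) *
                ((η - t) ^ (β - 1) * Real.exp (-lam * (η - t))) := by
            intro η hη
            have hη' : t < η := hη
            have h1' : (0:ℝ) ≤ (η - t) ^ (β - 1) := Real.rpow_nonneg (by linarith) _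
            have h2' : (0:ℝ) ≤ (t - x) ^ (α - 1) := Real.rpow_nonneg (by linarith) _
            rw [hsplit t η, Real.norm_eq_abs, abs_mul, abs_of_nonneg (by positivity),
              abs_mul, abs_of_nonneg (by positivity)]
            calc ((t - x) ^ (α - 1) * Real.exp (-lam * (t - x))) *
                  ((η - t) ^ (β - 1) * Real.exp (-lam * (η - t)) * |f η|)
                ≤ ((t - x) ^ (α - 1) * Real.exp (-lam * (t - x))) *
                  ((η - t) ^ (β - 1) * Real.exp (-lam * (η - t)) * C) := by
                  apply mul_le_mul_of_nonneg_left _ (by positivity)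
                  exact mul_le_mul_of_nonneg_left (hC η) (by positivity)
              _ = ((t - x) ^ (α - 1) * Real.exp (-lam * (t - x)) * C) *
                  ((η - t) ^ (β - 1) * Real.exp (-lam * (η - t))) := by ring
          calc ∫ η in Ioi t, ‖g' (t, η)‖
              ≤ ∫ η in Ioi t, ((t - x) ^ (α - 1) * Real.exp (-lam * (t - x)) * C) *
                  ((η - t) ^ (β - 1) * Real.exp (-lam * (η - t))) := by
                refine setIntegral_mono_on hInt1.norm
                  ((ker_integrableOn hβ hlam t).const_mul _) measurableSet_Ioi hb
            _ = ((t - x) ^ (α - 1) * Real.exp (-lam * (t - x)) * C) * Kβ := by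
                rw [integral_const_mul, ker_integral hβ hlam t]
            _ = C * Kβ * ((t - x) ^ (α - 1) * Real.exp (-lam * (t - x))) := by ring
        · have hpt : ∀ η, S.indicator g' (t, η) = 0 := fun η => congrFun (hslice0 t hxt) η
          simp only [hpt, norm_zero, integral_zero]
          rw [indicator_of_notMem (show t ∉ Ioi x from hxt)]
  -- now the computation
  have hgt : ∀ t : ℝ, rightTemperedIntegral β lam f t =
      (1 / Real.Gamma β) * ∫ η in Ioi t, (η - t) ^ (β - 1) * Real.exp (-lam * (η - t)) * f η := by
    intro t
    rw [rightTemperedIntegral, integral_Ici_eq_integral_Ioi]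
  have key1 : ∀ t ∈ Ioi x,
      (t - x) ^ (α - 1) * Real.exp (-lam * (t - x)) * rightTemperedIntegral β lam f t
        = (1 / Real.Gamma β) * ∫ η, S.indicator g' (t, η) := by
    intro t hxt
    have hxt' : x < t := hxt
    rw [hgt t]
    have h2 : ∫ η, S.indicator g' (t, η) = ∫ η in Ioi t, g' (t, η) := by
      rw [hslice t hxt', integral_indicator measurableSet_Ioi]
    rw [h2]
    have h3 : ∫ η in Ioi t, g' (t, η)
        = ((t - x) ^ (α - 1) * Real.exp (-lam * (t - x))) *
            ∫ η in Ioi t, (η - t) ^ (β - 1) * Real.exp (-lam * (η - t)) * f η := by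
      rw [← integral_const_mul]
      refine setIntegral_congr_fun measurableSet_Ioi fun η _ => ?_
      exact hsplit t η
    rw [h3]
    ring
  have key2 : ∀ η ∈ Ioi x, (∫ t, S.indicator g' (t, η))
      = (Real.Gamma α * Real.Gamma β / Real.Gamma (α + β)) *
          ((η - x) ^ (α + β - 1) * Real.exp (-lam * (η - x)) * f η) := by
    intro η hη
    have hxη : x < η := hη
    have hFη : (fun t => S.indicator g' (t, η)) = (Ioo x η).indicator fun t => g' (t, η) := by
      funext t
      by_cases h1 : x < t
      · by_cases h2 : t < η
        · simp [hSdef, indicator, h1, h2]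
        · simp [hSdef, indicator, h1, h2]
      · have : ¬ (x < t ∧ t < η) := fun hc => h1 hc.1
        simp [hSdef, indicator, h1]
    rw [hFη, integral_indicator measurableSet_Ioo]
    have h4 : ∫ t in Ioo x η, g' (t, η)
        = (∫ t in Ioo x η, (t - x) ^ (α - 1) * (η - t) ^ (β - 1)) *
            (Real.exp (-lam * (η - x)) * f η) := by
      rw [← integral_mul_const]
      refine setIntegral_congr_fun measurableSet_Ioo fun t _ => ?_
      simp only [hg']
      ring
    rw [h4]
    have h5 : ∫ t in Ioo x η, (t - x) ^ (α - 1) * (η - t) ^ (β - 1)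
        = (η - x) ^ (α + β - 1) * (Real.Gamma α * Real.Gamma β / Real.Gamma (α + β)) := by
      rw [← integral_Ioc_eq_integral_Ioo, ← intervalIntegral.integral_of_le hxη.le]
      exact beta_interval hα hβ hxη
    rw [h5]
    ring
  -- main chain
  have main : ∫ t in Ioi x,
      (t - x) ^ (α - 1) * Real.exp (-lam * (t - x)) * rightTemperedIntegral β lam f t
      = (1 / Real.Gamma β) * ((Real.Gamma α * Real.Gamma β / Real.Gamma (α + β)) *
          ∫ η in Ioi x, (η - x) ^ (α + β - 1) * Real.exp (-lam * (η - x)) * f η) := by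
    rw [setIntegral_congr_fun measurableSet_Ioi key1, integral_const_mul]
    congr 1
    rw [setIntegral_eq_integral_of_forall_compl_eq_zero (fun t ht => by
      rw [show (fun η => S.indicator g' (t, η)) = fun _ => (0:ℝ) from hslice0 t ht]
      exact integral_zero _ _)]
    rw [integral_integral_swap hFint]
    rw [← setIntegral_eq_integral_of_forall_compl_eq_zero (s := Ioi x) (fun η hη => by
      have : (fun t => S.indicator g' (t, η)) = fun _ => (0:ℝ) := by
        funext t
        have : ¬ (x < t ∧ t < η) := by
          intro hc
          exact hη (lt_trans hc.1 hc.2)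
        simp [hSdef, indicator, this]
      rw [this]
      exact integral_zero _ _)]
    rw [setIntegral_congr_fun measurableSet_Ioi key2, integral_const_mul]
  -- conclude
  rw [rightTemperedIntegral, rightTemperedIntegral, integral_Ici_eq_integral_Ioi,
    integral_Ici_eq_integral_Ioi, main]
  field_simp
  ring_nf
  congr 1
  funext η
  ring_nf
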